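/- arXiv:2312.08753 — 2 statements merged into one kernel-verified Lean document; each statement's English description precedes it below -/
import Mathlib

section
/- For w > 0 and fixed SINR value γ ≥ 0, the function g(η) = w log(1+η) − w η + w(1+η) γ/(1+γ) over η ≥ 0 is maximized at η = γ, and g(γ) = w log(1+γ). -/
theorem stmt5 (w γ : ℝ) (hw : 0 < w) (hγ : 0 ≤ γ) :
    let g : ℝ → ℝ := fun η => w * Real.log (1 + η) - w * η + w * (1 + η) * γ / (1 + γ)
    (∀ η ≥ (0 : ℝ), g η ≤ g γ) ∧ g γ = w * Real.log (1 + γ) := by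
  intro g
  have h1γ : (0:ℝ) < 1 + γ := by linarith
  constructor
  · intro η hη
    have h1η : (0:ℝ) < 1 + η := by linarith
    have key := Real.log_le_sub_one_of_pos (show 0 < (1+η)/(1+γ) by positivity)
    rw [Real.log_div (ne_of_gt h1η) (ne_of_gt h1γ)] at key
    have key2 := mul_le_mul_of_nonneg_left key hw.le
    have key' : (Real.log (1 + η) - Real.log (1 + γ)) * (1 + γ) ≤ η - γ := by
      have h := mul_le_mul_of_nonneg_right key h1γ.le
      have : ((1 + η) / (1 + γ) - 1) * (1 + γ) = η - γ := by field_simp; ring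
      linarith [h, this.le, this.ge]
    show w * Real.log (1 + η) - w * η + w * (1 + η) * γ / (1 + γ) ≤
      w * Real.log (1 + γ) - w * γ + w * (1 + γ) * γ / (1 + γ)
    rw [← sub_nonneg]
    have h2 : w * Real.log (1 + γ) - w * γ + w * (1 + γ) * γ / (1 + γ) -
        (w * Real.log (1 + η) - w * η + w * (1 + η) * γ / (1 + γ)) =
        w * ((η - γ) - (Real.log (1 + η) - Real.log (1 + γ)) * (1 + γ)) / (1 + γ) := by
      field_simp
      ring
    rw [h2]
    apply div_nonneg _ h1γ.le
    nlinarith [key', hw.le]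
  · show w * Real.log (1 + γ) - w * γ + w * (1 + γ) * γ / (1 + γ) = w * Real.log (1 + γ)
    field_simp
    ring
end

section
/- For the block-diagonal covariance structure: if C[q,y] = blkdiag(a1·a_L a_L^H + a2·I_L, d·I_a) and C[y,y] = blkdiag(a1·a_L a_L^H + (a2+s)·I_L, (d+s)·I_a) with a1, a2, d, s > 0 and ‖a_L‖^2 = L, then C[q,y] C[y,y]^{-1} = blkdiag(a3·a_L a_L^H + a4·I_L, a5·I_a) where a3 = a1 s/[(a2+s)(a2+s+L a1)], a4 = a2/(a2+s), a5 = d/(d+s). -/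
open Matrix

lemma vmv_mul_vmv {n : Type*} [Fintype n] [DecidableEq n] (u v w x : n → ℂ) :
    vecMulVec u v * vecMulVec w x = (v ⬝ᵥ w) • vecMulVec u x := by
  ext i j
  simp only [mul_apply, vecMulVec_apply, Matrix.smul_apply, dotProduct, smul_eq_mul,
    Finset.sum_mul]
  exact Finset.sum_congr rfl fun k _ => by ring

theorem stmt17 {L a : ℕ} (a1 a2 d s : ℝ)
    (h1 : 0 < a1) (h2 : 0 < a2) (hd : 0 < d) (hs : 0 < s)
    (aL : Fin L → ℂ) (haL : star aL ⬝ᵥ aL = (L : ℂ)) :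
    (Matrix.fromBlocks
        ((a1 : ℂ) • vecMulVec aL (star aL) + (a2 : ℂ) • 1) 0 0
        ((d : ℂ) • (1 : Matrix (Fin a) (Fin a) ℂ))) *
    (Matrix.fromBlocks
        ((a1 : ℂ) • vecMulVec aL (star aL) + (((a2 + s) : ℝ) : ℂ) • 1) 0 0
        ((((d + s) : ℝ) : ℂ) • (1 : Matrix (Fin a) (Fin a) ℂ)))⁻¹
    = Matrix.fromBlocks
        ((((a1 * s / ((a2 + s) * (a2 + s + L * a1)) : ℝ)) : ℂ) • vecMulVec aL (star aL)
          + (((a2 / (a2 + s) : ℝ)) : ℂ) • 1) 0 0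
        ((((d / (d + s) : ℝ)) : ℂ) • (1 : Matrix (Fin a) (Fin a) ℂ)) := by
  set P : Matrix (Fin L) (Fin L) ℂ := vecMulVec aL (star aL) with hP
  have hPP : P * P = (L : ℂ) • P := by
    rw [hP, vmv_mul_vmv, haL]
  have expand : ∀ (x y u v : ℂ),
      (x • P + y • (1 : Matrix (Fin L) (Fin L) ℂ)) * (u • P + v • 1)
        = (x * u * L + x * v + y * u) • P + (y * v) • 1 := by
    intro x y u v
    simp only [add_mul, mul_add, Matrix.smul_mul, Matrix.mul_smul, hPP, one_mul, mul_one,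
      smul_smul]
    module
  -- nonzero scalars
  have hz1 : (a2 : ℂ) + s ≠ 0 := by
    have : ((a2 + s : ℝ) : ℂ) ≠ 0 := by
      exact_mod_cast (by positivity : (a2 + s : ℝ) ≠ 0)
    push_cast at this; exact this
  have hz2 : (a2 : ℂ) + s + (L : ℂ) * a1 ≠ 0 := by
    have : ((a2 + s + L * a1 : ℝ) : ℂ) ≠ 0 := by
      exact_mod_cast (by positivity : (a2 + s + (L : ℝ) * a1 : ℝ) ≠ 0)
    push_cast at this; exact this
  have hz3 : (d : ℂ) + s ≠ 0 := by
    have : ((d + s : ℝ) : ℂ) ≠ 0 := by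
      exact_mod_cast (by positivity : (d + s : ℝ) ≠ 0)
    push_cast at this; exact this
  set t : ℂ := ((a2 + s : ℝ) : ℂ) with htdef
  have ht0 : t ≠ 0 := by rw [htdef]; push_cast; exact hz1
  have htL0 : t + (a1 : ℂ) * L ≠ 0 := by
    rw [htdef]; push_cast
    intro h; apply hz2; rw [← h]; ring
  have hds0 : ((d + s : ℝ) : ℂ) ≠ 0 := by push_cast; exact hz3
  set c : ℂ := -(a1 : ℂ) / (t * (t + a1 * L)) with hcdef
  set e : ℂ := t⁻¹ with hedef
  -- explicit inverse of the second factor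
  have hinv : (Matrix.fromBlocks
        ((a1 : ℂ) • P + t • 1) 0 0
        ((((d + s) : ℝ) : ℂ) • (1 : Matrix (Fin a) (Fin a) ℂ)))⁻¹
      = Matrix.fromBlocks (c • P + e • 1) 0 0
        ((((d + s) : ℝ) : ℂ)⁻¹ • (1 : Matrix (Fin a) (Fin a) ℂ)) := by
    apply inv_eq_right_inv
    rw [Matrix.fromBlocks_multiply]
    simp only [Matrix.mul_zero, Matrix.zero_mul, add_zero, zero_add]
    rw [expand]
    have h1' : ((a1:ℂ) * c * L + (a1:ℂ) * e + t * c) = 0 := by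
      rw [hcdef, hedef]
      field_simp
      ring
    have h2' : t * e = 1 := by
      rw [hedef]; exact mul_inv_cancel₀ ht0
    rw [h1', h2']
    simp only [zero_smul, zero_add, one_smul, Matrix.smul_mul, Matrix.one_mul, smul_smul,
      mul_inv_cancel₀ hds0]
    exact Matrix.fromBlocks_one
  rw [hinv, Matrix.fromBlocks_multiply]
  simp only [Matrix.mul_zero, Matrix.zero_mul, add_zero, zero_add]
  rw [expand]
  have hz2' : (a2 : ℂ) + s + (a1 : ℂ) * L ≠ 0 := by
    intro h; apply hz2; rw [← h]; ring
  have hA : (a1:ℂ) * c * (L:ℂ) + (a1:ℂ) * e + (a2:ℂ) * c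
      = ((a1 * s / ((a2 + s) * (a2 + s + L * a1)) : ℝ) : ℂ) := by
    rw [hcdef, hedef, htdef]
    push_cast
    field_simp [hz1, hz2']
    ring
  have hB : (a2:ℂ) * e = ((a2 / (a2 + s) : ℝ) : ℂ) := by
    rw [hedef, htdef]
    push_cast
    field_simp [hz1]
  have hC : (d:ℂ) • ((((d + s) : ℝ):ℂ)⁻¹ • (1 : Matrix (Fin a) (Fin a) ℂ))
      = (((d / (d + s) : ℝ)) : ℂ) • 1 := by
    rw [smul_smul]
    congr 1
    push_cast
    field_simp [hz3]
  simp only [Matrix.smul_mul, Matrix.one_mul, hA, hB, hC]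
end
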